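/- Let N be a positive natural number, Δx > 0, f : ZMod N → ℝ, and define the periodic piecewise constant function F : ℝ → ℝ by F(x) = f(⌊x/Δx⌋ mod N), where ⌊·⌋ is the floor and the integer ⌊x/Δx⌋ is cast into ZMod N. Let δ ∈ ℝ, and set m = ⌊−δ/Δx⌋ and θ = Int.fract(−δ/Δx). Then for every i ∈ ℤ, (1/Δx)·∫_{iΔx}^{(i+1)Δx} F(x − δ) dx = (1 − θ)·f((i + m) mod N) + θ·f((i + m + 1) mod N). -/

import Mathlib

/-- The exact cell average of a translated periodic piecewise-constant grid
function equals the two-point semi-Lagrangian interpolation formula: if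
`F(x) = f(⌊x/Δx⌋ mod N)` and `−δ/Δx = m + θ` with `m = ⌊−δ/Δx⌋` and
`θ = fract(−δ/Δx)`, then the average of `F(· − δ)` over the `i`-th cell is
`(1 − θ)·f(i + m) + θ·f(i + m + 1)`. -/
theorem cell_average_of_translate (N : ℕ) (hN : 0 < N)
    (Δx : ℝ) (hΔx : 0 < Δx) (f : ZMod N → ℝ)
    (F : ℝ → ℝ) (hF : ∀ x : ℝ, F x = f ((⌊x / Δx⌋ : ℤ) : ZMod N))
    (δ : ℝ) (m : ℤ) (hm : m = ⌊-δ / Δx⌋) (θ : ℝ) (hθ : θ = Int.fract (-δ / Δx)) :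
    ∀ i : ℤ,
      (1 / Δx) * ∫ x in (i * Δx : ℝ)..((i + 1) * Δx : ℝ), F (x - δ)
        = (1 - θ) * f ((↑(i + m) : ZMod N)) + θ * f ((↑(i + m + 1) : ZMod N)) := by
  intro i
  have hθ0 : 0 ≤ θ := hθ ▸ Int.fract_nonneg _
  have hθ1 : θ < 1 := hθ ▸ Int.fract_lt_one _
  have hmθ : -δ / Δx = (m : ℝ) + θ := by
    rw [hm, hθ]; exact (Int.floor_add_fract _).symm
  set a : ℝ := (i : ℝ) * Δx with ha
  set b : ℝ := ((i : ℝ) + 1) * Δx with hb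
  set c : ℝ := ((i : ℝ) + 1 - θ) * Δx with hc
  have hac : a ≤ c := by nlinarith
  have hcb : c ≤ b := by nlinarith
  -- floor computations
  have key1 : ∀ x : ℝ, a ≤ x → x < c → F (x - δ) = f ((↑(i + m) : ZMod N)) := by
    intro x h1 h2
    rw [hF]
    have hfl : ⌊(x - δ) / Δx⌋ = i + m := by
      have hx : (x - δ) / Δx = x / Δx + (-δ / Δx) := by ring
      have hxl : (i : ℝ) ≤ x / Δx := by
        rw [le_div_iff₀ hΔx]; linarith
      have hxu : x / Δx < (i : ℝ) + 1 - θ := by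
        rw [div_lt_iff₀ hΔx]; linarith
      rw [Int.floor_eq_iff]
      constructor
      · push_cast; rw [hx, hmθ]; linarith
      · push_cast; rw [hx, hmθ]; linarith
    rw [hfl]
  have key2 : ∀ x : ℝ, c ≤ x → x ≤ b → F (x - δ) = f ((↑(i + m + 1) : ZMod N)) := by
    intro x h1 h2
    rw [hF]
    have hfl : ⌊(x - δ) / Δx⌋ = i + m + 1 := by
      have hx : (x - δ) / Δx = x / Δx + (-δ / Δx) := by ring
      have hxl : (i : ℝ) + 1 - θ ≤ x / Δx := by
        rw [le_div_iff₀ hΔx]; linarith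
      have hxu : x / Δx ≤ (i : ℝ) + 1 := by
        rw [div_le_iff₀ hΔx]; linarith
      rw [Int.floor_eq_iff]
      constructor
      · push_cast; rw [hx, hmθ]; linarith
      · push_cast; rw [hx, hmθ]; linarith
    rw [hfl]
  -- a.e. statement avoiding the single bad point `c`
  have hne : ∀ᵐ x : ℝ, x ≠ c := by
    have : (MeasureTheory.volume ({c} : Set ℝ)) = 0 := MeasureTheory.measure_singleton c
    filter_upwards [MeasureTheory.measure_eq_zero_iff_ae_notMem.mp this] with x hx
    simpa using hx
  have hae1 : ∀ᵐ x : ℝ, x ∈ Set.Ioc a c → F (x - δ) = f ((↑(i + m) : ZMod N)) := by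
    filter_upwards [hne] with x hx hxm
    exact key1 x hxm.1.le (lt_of_le_of_ne hxm.2 hx)
  -- integrability of the two pieces
  have hint1 : IntervalIntegrable (fun x => F (x - δ)) MeasureTheory.volume a c := by
    rw [intervalIntegrable_iff_integrableOn_Ioc_of_le hac]
    apply MeasureTheory.Integrable.congr
      ((MeasureTheory.integrableOn_const_iff (C := f ((↑(i + m) : ZMod N)))).mpr (Or.inr measure_Ioc_lt_top))
    rw [Filter.EventuallyEq, MeasureTheory.ae_restrict_iff' measurableSet_Ioc]
    filter_upwards [hae1] with x hx hxm
    exact (hx hxm).symm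
  have hint2 : IntervalIntegrable (fun x => F (x - δ)) MeasureTheory.volume c b := by
    rw [intervalIntegrable_iff_integrableOn_Ioc_of_le hcb]
    apply MeasureTheory.Integrable.congr
      ((MeasureTheory.integrableOn_const_iff (C := f ((↑(i + m + 1) : ZMod N)))).mpr (Or.inr measure_Ioc_lt_top))
    rw [Filter.EventuallyEq, MeasureTheory.ae_restrict_iff' measurableSet_Ioc]
    filter_upwards with x hxm
    exact (key2 x hxm.1.le hxm.2).symm
  -- compute the two pieces
  have int1 : ∫ x in a..c, F (x - δ) = (c - a) * f ((↑(i + m) : ZMod N)) := by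
    rw [intervalIntegral.integral_congr_ae (g := fun _ => f ((↑(i + m) : ZMod N))) ?_,
      intervalIntegral.integral_const, smul_eq_mul]
    filter_upwards [hae1] with x hx hxm
    exact hx (Set.uIoc_of_le hac ▸ hxm)
  have int2 : ∫ x in c..b, F (x - δ) = (b - c) * f ((↑(i + m + 1) : ZMod N)) := by
    rw [intervalIntegral.integral_congr (g := fun _ => f ((↑(i + m + 1) : ZMod N))) ?_,
      intervalIntegral.integral_const, smul_eq_mul]
    intro x hx
    rw [Set.uIcc_of_le hcb] at hx
    exact key2 x hx.1 hx.2
  have hsplit : ∫ x in a..b, F (x - δ)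
      = (∫ x in a..c, F (x - δ)) + ∫ x in c..b, F (x - δ) :=
    (intervalIntegral.integral_add_adjacent_intervals hint1 hint2).symm
  rw [hsplit, int1, int2]
  have h1 : c - a = (1 - θ) * Δx := by rw [ha, hc]; ring
  have h2 : b - c = θ * Δx := by rw [hb, hc]; ring
  rw [h1, h2]
  field_simp
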